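/- There is no quadruple $(x,y,z,t) \in \mathbb{Z}^4$ with $\gcd(x,y,z)=1$ satisfying $x^2 - 2y^2 + 64z^2 = (2t^2+3)^2$. -/

import Mathlib

/-- If `p ≡ ±3 mod 8` is prime and `p ∣ x² - 2y²` then `p ∣ x` and `p ∣ y`. -/
lemma key6 (p : ℕ) (hp : p.Prime) (hp8 : p % 8 = 3 ∨ p % 8 = 5) (x y : ℤ)
    (h : (p : ℤ) ∣ x ^ 2 - 2 * y ^ 2) : (p : ℤ) ∣ x ∧ (p : ℤ) ∣ y := by
  haveI := Fact.mk hp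
  have h2 : ¬ IsSquare (2 : ZMod p) := by
    rw [ZMod.exists_sq_eq_two_iff (p := p) (by omega)]
    omega
  have hx : (x : ZMod p) ^ 2 = 2 * (y : ZMod p) ^ 2 := by
    have h0 : ((x ^ 2 - 2 * y ^ 2 : ℤ) : ZMod p) = 0 :=
      (ZMod.intCast_zmod_eq_zero_iff_dvd _ p).mpr h
    push_cast at h0
    linear_combination h0
  have hy : (y : ZMod p) = 0 := by
    by_contra hy
    exact h2 ⟨(x : ZMod p) * (y : ZMod p)⁻¹, by field_simp; linear_combination -hx⟩
  have hx0 : (x : ZMod p) = 0 := by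
    have : (x : ZMod p) ^ 2 = 0 := by rw [hx, hy]; ring
    exact pow_eq_zero_iff (by norm_num) |>.mp this
  exact ⟨(ZMod.intCast_zmod_eq_zero_iff_dvd _ p).mp hx0,
    (ZMod.intCast_zmod_eq_zero_iff_dvd _ p).mp hy⟩

/-- `x² - 2y²` has even `p`-adic valuation for `p ≡ ±3 mod 8`. -/
lemma lemA6 (p : ℕ) (hp : p.Prime) (hp8 : p % 8 = 3 ∨ p % 8 = 5) :
    ∀ N : ℕ, N ≠ 0 → ∀ x y : ℤ, (x ^ 2 - 2 * y ^ 2).natAbs = N →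
      Even (N.factorization p) := by
  intro N
  induction N using Nat.strong_induction_on with
  | _ N ih =>
    intro hN0 x y hxy
    by_cases hpd : p ∣ N
    · have hpd' : (p : ℤ) ∣ x ^ 2 - 2 * y ^ 2 := by
        have h1 : ((p : ℤ)).natAbs ∣ (x ^ 2 - 2 * y ^ 2).natAbs := by
          simpa [hxy] using hpd
        exact Int.natAbs_dvd_natAbs.mp h1
      obtain ⟨hx, hy⟩ := key6 p hp hp8 x y hpd'
      obtain ⟨x', rfl⟩ := hx
      obtain ⟨y', rfl⟩ := hy
      have hfact : ((p : ℤ) * x') ^ 2 - 2 * ((p : ℤ) * y') ^ 2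
          = (p : ℤ) ^ 2 * (x' ^ 2 - 2 * y' ^ 2) := by ring
      set M := (x' ^ 2 - 2 * y' ^ 2).natAbs with hM
      have hN : N = p ^ 2 * M := by
        rw [← hxy, hfact, Int.natAbs_mul, Int.natAbs_pow, Int.natAbs_natCast]
      have hM0 : M ≠ 0 := by
        rintro h; rw [h, mul_zero] at hN; exact hN0 hN
      have hMlt : M < N := by
        rw [hN]
        have h4 : 1 < p ^ 2 := by have := hp.two_le; nlinarith
        calc M = 1 * M := (one_mul M).symm
          _ < p ^ 2 * M := mul_lt_mul_of_pos_right h4 (by omega)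
      have hEM := ih M hMlt hM0 x' y' rfl
      have hp2 : (p : ℕ) ^ 2 ≠ 0 := pow_ne_zero _ hp.pos.ne'
      rw [hN, Nat.factorization_mul hp2 hM0]
      simp only [Finsupp.add_apply, hp.factorization_pow, Finsupp.single_eq_same]
      exact (even_two).add hEM
    · rw [Nat.factorization_eq_zero_of_not_dvd hpd]
      exact Even.zero

/-- An odd number whose primes `≡ ±3 mod 8` all occur to even multiplicity
is `≡ ±1 mod 8`. -/
lemma lemC6 : ∀ n : ℕ, n ≠ 0 → n % 2 = 1 →
    (∀ p : ℕ, p.Prime → p ∣ n → p % 8 = 3 ∨ p % 8 = 5 → Even (n.factorization p)) →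
    n % 8 = 1 ∨ n % 8 = 7 := by
  intro n
  induction n using Nat.strong_induction_on with
  | _ n ih =>
    intro hn0 hn2 hfac
    rcases Nat.lt_or_ge n 2 with h1 | h1
    · left; omega
    · set p := n.minFac with hpdef
      have hp : p.Prime := Nat.minFac_prime (by omega)
      have hpd : p ∣ n := Nat.minFac_dvd n
      have hp2 : p % 2 = 1 := by
        rcases Nat.even_or_odd p with he | ho
        · exfalso; obtain ⟨k, hk⟩ := he
          have : 2 ∣ n := dvd_trans ⟨k, by omega⟩ hpd
          omega
        · exact Nat.odd_iff.mp ho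
      have hp3 : 3 ≤ p := by have := hp.two_le; omega
      by_cases hS : p % 8 = 3 ∨ p % 8 = 5
      · have heven := hfac p hp hpd hS
        have hf1 : 0 < n.factorization p := hp.factorization_pos_of_dvd hn0 hpd
        have hf2 : 2 ≤ n.factorization p := by
          rcases heven with ⟨k, hk⟩; omega
        obtain ⟨m, hm⟩ := (Nat.Prime.pow_dvd_iff_le_factorization hp hn0).mpr hf2
        have hmdvd : m ∣ n := ⟨p ^ 2, by rw [hm]; ring⟩
        have hm0 : m ≠ 0 := by rintro rfl; rw [mul_zero] at hm; exact hn0 hm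
        have hm1 : 1 ≤ m := Nat.one_le_iff_ne_zero.mpr hm0
        have hmlt : m < n := by
          rw [hm]
          have h4 : 1 < p ^ 2 := by nlinarith
          calc m = 1 * m := (one_mul m).symm
            _ < p ^ 2 * m := mul_lt_mul_of_pos_right h4 (by omega)
        have hm2 : m % 2 = 1 := by
          rcases Nat.even_or_odd m with he | ho
          · exfalso; obtain ⟨k, hk⟩ := he
            have : 2 ∣ n := dvd_trans ⟨k, by omega⟩ hmdvd
            omega
          · exact Nat.odd_iff.mp ho
        have hmfac : ∀ q : ℕ, q.Prime → q ∣ m → q % 8 = 3 ∨ q % 8 = 5 →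
            Even (m.factorization q) := by
          intro q hq hqm hq8
          have hqn := hfac q hq (hqm.trans hmdvd) hq8
          rw [hm, Nat.factorization_mul (pow_ne_zero _ hp.pos.ne') hm0] at hqn
          simp only [Finsupp.add_apply, hp.factorization_pow] at hqn
          rcases eq_or_ne q p with rfl | hne
          · rw [Finsupp.single_eq_same] at hqn
            rcases hqn with ⟨k, hk⟩; exact ⟨k - 1, by omega⟩
          · rwa [Finsupp.single_eq_of_ne' (Ne.symm hne), zero_add] at hqn
        have hm8 := ih m hmlt hm0 hm2 hmfac
        have hpsq : p ^ 2 % 8 = 1 := by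
          rw [Nat.pow_mod]; rcases hS with h | h <;> rw [h] <;> norm_num
        rw [hm, Nat.mul_mod, hpsq]
        rcases hm8 with h | h <;> rw [h] <;> norm_num
      · have hp8 : p % 8 = 1 ∨ p % 8 = 7 := by omega
        obtain ⟨m, hm⟩ := hpd
        have hmdvd : m ∣ n := ⟨p, by rw [hm]; ring⟩
        have hm0 : m ≠ 0 := by rintro rfl; rw [mul_zero] at hm; exact hn0 hm
        have hm1 : 1 ≤ m := Nat.one_le_iff_ne_zero.mpr hm0
        have hmlt : m < n := by
          rw [hm]
          calc m = 1 * m := (one_mul m).symm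
            _ < p * m := mul_lt_mul_of_pos_right (by omega) (by omega)
        have hm2 : m % 2 = 1 := by
          rcases Nat.even_or_odd m with he | ho
          · exfalso; obtain ⟨k, hk⟩ := he
            have : 2 ∣ n := dvd_trans ⟨k, by omega⟩ hmdvd
            omega
          · exact Nat.odd_iff.mp ho
        have hmfac : ∀ q : ℕ, q.Prime → q ∣ m → q % 8 = 3 ∨ q % 8 = 5 →
            Even (m.factorization q) := by
          intro q hq hqm hq8
          have hqn := hfac q hq (hqm.trans hmdvd) hq8
          have hne : q ≠ p := by rintro rfl; omega
          rw [hm, Nat.factorization_mul hp.pos.ne' hm0] at hqn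
          simp only [Finsupp.add_apply, hp.factorization] at hqn
          rwa [Finsupp.single_eq_of_ne' (Ne.symm hne), zero_add] at hqn
        have hm8 := ih m hmlt hm0 hm2 hmfac
        rw [hm, Nat.mul_mod]
        rcases hp8 with h | h <;> rcases hm8 with h' | h' <;> rw [h, h'] <;> norm_num

theorem stmt6 :
    ¬ ∃ x y z t : ℤ, Int.gcd (Int.gcd x y) z = 1 ∧
      x ^ 2 - 2 * y ^ 2 + 64 * z ^ 2 = (2 * t ^ 2 + 3) ^ 2 := by
  rintro ⟨x, y, z, t, hgcd, heq⟩
  set w : ℤ := 2 * t ^ 2 + 3 with hw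
  set a : ℤ := w - 8 * z with hadef
  set b : ℤ := w + 8 * z with hbdef
  have hab : x ^ 2 - 2 * y ^ 2 = a * b := by
    rw [hadef, hbdef, hw]; nlinarith [heq]
  -- a mod 8 is 3 or 5
  have ha8 : a % 8 = 3 ∨ a % 8 = 5 := by
    rcases Int.even_or_odd t with ⟨k, hk⟩ | ⟨k, hk⟩
    · have : a = 8 * (k * k) + 3 - 8 * z := by rw [hadef, hw, hk]; ring
      omega
    · have : a = 8 * (k * k) + 8 * k + 5 - 8 * z := by rw [hadef, hw, hk]; ring
      omega
  have hb2 : b % 2 = 1 := by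
    have : b = 2 * t ^ 2 + 3 + 8 * z := by rw [hbdef, hw]
    have ht : t ^ 2 = t * t := sq t
    omega
  set A : ℕ := a.natAbs with hA
  set B : ℕ := b.natAbs with hB
  have hA8 : A % 8 = 3 ∨ A % 8 = 5 := by omega
  have hA0 : A ≠ 0 := by omega
  have hA2 : A % 2 = 1 := by omega
  have hB0 : B ≠ 0 := by omega
  -- find a bad prime with odd multiplicity in A
  have hnot : ¬ (A % 8 = 1 ∨ A % 8 = 7) := by omega
  have hex : ∃ p : ℕ, p.Prime ∧ p ∣ A ∧ (p % 8 = 3 ∨ p % 8 = 5) ∧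
      ¬ Even (A.factorization p) := by
    by_contra hc
    push_neg at hc
    exact hnot (lemC6 A hA0 hA2 hc)
  obtain ⟨p, hp, hpA, hp8, hpodd⟩ := hex
  have hpa : (p : ℤ) ∣ a := by
    have : ((p : ℤ)).natAbs ∣ a.natAbs := by simpa using hpA
    exact Int.natAbs_dvd_natAbs.mp this
  -- p does not divide b
  have hpb : ¬ (p : ℤ) ∣ b := by
    intro hpb
    have hpPrime : Prime (p : ℤ) := Int.prime_iff_natAbs_prime.mpr (by simpa using hp)
    have hpz' : (p : ℤ) ∣ z := by
      have hpz : (p : ℤ) ∣ 16 * z := by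
        have h16 : 16 * z = b - a := by rw [hadef, hbdef]; ring
        rw [h16]; exact dvd_sub hpb hpa
      rcases hpPrime.dvd_mul.mp hpz with h16 | hz
      · exfalso
        have h16n : p ∣ 16 := by
          have := Int.natAbs_dvd_natAbs.mpr h16; simpa using this
        have h2 : p ∣ 2 := hp.dvd_of_dvd_pow
          ((by norm_num : (16 : ℕ) = 2 ^ 4) ▸ h16n)
        have := Nat.le_of_dvd (by norm_num) h2
        omega
      · exact hz
    have hxy : (p : ℤ) ∣ x ^ 2 - 2 * y ^ 2 := by
      rw [hab]; exact Dvd.dvd.mul_right hpa b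
    obtain ⟨hpx, hpy⟩ := key6 p hp hp8 x y hxy
    have hg1 : (p : ℤ) ∣ (Int.gcd x y : ℤ) := Int.dvd_coe_gcd hpx hpy
    have hg2 : (p : ℤ) ∣ (Int.gcd (Int.gcd x y) z : ℤ) := Int.dvd_coe_gcd hg1 hpz'
    rw [hgcd] at hg2
    have hd1 : (p : ℕ) ∣ 1 := by
      have := Int.natAbs_dvd_natAbs.mpr hg2; simpa using this
    have h1 := Nat.dvd_one.mp hd1
    have := hp.two_le
    omega
  -- conclude
  have hNfac := lemA6 p hp hp8 (A * B) (by positivity) x y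
    (by rw [hab, Int.natAbs_mul])
  rw [Nat.factorization_mul hA0 hB0] at hNfac
  have hBfac : B.factorization p = 0 := by
    apply Nat.factorization_eq_zero_of_not_dvd
    intro h
    exact hpb (Int.natAbs_dvd_natAbs.mp (by simpa using h))
  simp only [Finsupp.add_apply, hBfac, add_zero] at hNfac
  exact hpodd hNfac
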